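/- Every rational pointed cone $C \subset \mathbb{R}^d$ can be triangulated into empty simplicial cones $C'$ with $\Delta_{C'} \subset \Delta_C$. -/

import Mathlib

open Finset

/-- The cone generated by a finite set `s` of integer vectors. -/
def coneFS (d : ℕ) (s : Finset (Fin d → ℤ)) : Set (Fin d → ℝ) :=
  {x | ∃ c : (Fin d → ℤ) → ℝ, (∀ w, 0 ≤ c w) ∧ x = ∑ w ∈ s, c w • fun j => (w j : ℝ)}

/-- The cone generated by a finite family of integer vectors. -/
def coneFam (d m : ℕ) (v : Fin m → Fin d → ℤ) : Set (Fin d → ℝ) :=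
  {x | ∃ c : Fin m → ℝ, (∀ i, 0 ≤ c i) ∧ x = ∑ i, c i • fun j => (v i j : ℝ)}

/-- An integer vector is primitive if no natural number `n ≠ 1` divides all its entries. -/
def Primitive (d : ℕ) (w : Fin d → ℤ) : Prop := ∀ n : ℕ, (∀ j, (n : ℤ) ∣ w j) → n = 1

noncomputable section Stmt13Aux

private def castR (d : ℕ) (w : Fin d → ℤ) : Fin d → ℝ := fun j => (w j : ℝ)

private def nsq (d : ℕ) (w : Fin d → ℤ) : ℝ := ∑ j, (w j : ℝ)^2

private lemma castR_inj (d : ℕ) : Function.Injective (castR d) := by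
  intro a b h
  funext j
  have := congrFun h j
  simp only [castR] at this
  exact_mod_cast this

private lemma castR_eq_zero {d : ℕ} {w : Fin d → ℤ} (h : castR d w = 0) : w = 0 := by
  funext j
  have := congrFun h j
  simp only [castR, Pi.zero_apply] at this
  exact_mod_cast this

private lemma nsq_nonneg (d : ℕ) (w : Fin d → ℤ) : 0 ≤ nsq d w :=
  Finset.sum_nonneg fun (j : Fin d) _ => sq_nonneg ((w j : ℝ))

private lemma nsq_pos {d : ℕ} {w : Fin d → ℤ} (h : w ≠ 0) : 0 < nsq d w := by
  obtain ⟨j, hj⟩ := Function.ne_iff.1 h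
  have hj' : w j ≠ 0 := by simpa using hj
  have h2 : (0:ℝ) < (w j : ℝ)^2 := by
    have : (w j : ℝ) ≠ 0 := by exact_mod_cast hj'
    positivity
  refine lt_of_lt_of_le h2 ?_
  exact Finset.single_le_sum (f := fun i => ((w i : ℝ))^2)
    (fun i _ => sq_nonneg _) (mem_univ j)

private lemma nsq_one_le {d : ℕ} {w : Fin d → ℤ} (h : w ≠ 0) : 1 ≤ nsq d w := by
  obtain ⟨j, hj⟩ := Function.ne_iff.1 h
  have hj' : w j ≠ 0 := by simpa using hj
  have h1 : (1:ℝ) ≤ (w j : ℝ)^2 := by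
    have ha : 1 ≤ |w j| := Int.one_le_abs hj'
    have hb : (1:ℝ) ≤ |(w j : ℝ)| := by exact_mod_cast (by simpa using ha)
    rw [← sq_abs]
    nlinarith [abs_nonneg ((w j : ℝ))]
  calc (1:ℝ) ≤ (w j : ℝ)^2 := h1
    _ ≤ nsq d w := Finset.single_le_sum (f := fun i => ((w i : ℝ))^2)
        (fun i _ => sq_nonneg _) (mem_univ j)

/-- A representation of `x` as a nonnegative combination of the points of `P`. -/
private def IsRep (d : ℕ) (P : Finset (Fin d → ℤ)) (x : Fin d → ℝ) (c : (Fin d → ℤ) → ℝ) : Prop :=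
  (∀ w, 0 ≤ c w) ∧ (∀ w, w ∉ P → c w = 0) ∧ ∑ w ∈ P, c w • castR d w = x

private def cost0 (d : ℕ) (P : Finset (Fin d → ℤ)) (c : (Fin d → ℤ) → ℝ) : ℝ :=
  ∑ w ∈ P, c w * nsq d w

private def cvec (d : ℕ) (P : Finset (Fin d → ℤ)) (c : (Fin d → ℤ) → ℝ) : ℕ → ℝ := fun n =>
  match n with
  | 0 => cost0 d P c
  | Nat.succ k => if h : k < P.toList.length then c (P.toList.get ⟨k, h⟩) else 0

private def LexLt (a b : ℕ → ℝ) : Prop := ∃ k, (∀ j, j < k → a j = b j) ∧ a k < b k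

private def IsMinRep (d : ℕ) (P : Finset (Fin d → ℤ)) (x : Fin d → ℝ)
    (c : (Fin d → ℤ) → ℝ) : Prop :=
  IsRep d P x c ∧ ∀ e, IsRep d P x e → c = e ∨ LexLt (cvec d P c) (cvec d P e)

private lemma lexLt_asymm {a b : ℕ → ℝ} (h1 : LexLt a b) (h2 : LexLt b a) : False := by
  obtain ⟨k1, he1, hl1⟩ := h1
  obtain ⟨k2, he2, hl2⟩ := h2
  rcases lt_trichotomy k1 k2 with h | h | h
  · exact absurd (he2 k1 h).symm (ne_of_lt hl1)
  · subst h; exact absurd hl2 (not_lt.2 (le_of_lt hl1))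
  · exact absurd (he1 k2 h).symm (ne_of_lt hl2)

private lemma lexLt_irrefl {a : ℕ → ℝ} (h : LexLt a a) : False := by
  obtain ⟨k, _, hl⟩ := h; exact lt_irrefl _ hl

private lemma lexLt_total {a b : ℕ → ℝ} (h : a ≠ b) : LexLt a b ∨ LexLt b a := by
  classical
  have hex : ∃ n, a n ≠ b n := Function.ne_iff.1 h
  set k := Nat.find hex with hk
  have hne : a k ≠ b k := Nat.find_spec hex
  have hpre : ∀ j, j < k → a j = b j := fun j hj => by
    have := Nat.find_min hex hj; simpa using this
  rcases lt_or_gt_of_ne hne with hlt | hgt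
  · exact Or.inl ⟨k, hpre, hlt⟩
  · exact Or.inr ⟨k, fun j hj => (hpre j hj).symm, hgt⟩

private lemma cvec_combo (d : ℕ) (P : Finset (Fin d → ℤ)) (c e : (Fin d → ℤ) → ℝ) (t : ℝ)
    (n : ℕ) : cvec d P (fun w => c w + t * e w) n = cvec d P c n + t * cvec d P e n := by
  match n with
  | 0 =>
    simp only [cvec, cost0]
    rw [Finset.mul_sum, ← Finset.sum_add_distrib]
    exact Finset.sum_congr rfl fun w _ => by ring
  | Nat.succ k =>
    simp only [cvec]
    split <;> simp

private lemma cvec_inj {d : ℕ} {P : Finset (Fin d → ℤ)} {c e : (Fin d → ℤ) → ℝ}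
    (hc : ∀ w, w ∉ P → c w = 0) (he : ∀ w, w ∉ P → e w = 0)
    (h : cvec d P c = cvec d P e) : c = e := by
  funext w
  by_cases hw : w ∈ P
  · have : w ∈ P.toList := Finset.mem_toList.2 hw
    obtain ⟨⟨n, hn⟩, hget⟩ := List.mem_iff_get.1 this
    have := congrFun h (n + 1)
    simp only [cvec] at this
    rw [dif_pos hn, dif_pos hn, hget] at this
    exact this
  · rw [hc w hw, he w hw]

private lemma minRep_unique {d : ℕ} {P : Finset (Fin d → ℤ)} {x : Fin d → ℝ}
    {c e : (Fin d → ℤ) → ℝ} (hc : IsMinRep d P x c) (he : IsMinRep d P x e) : c = e := by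
  rcases hc.2 e he.1 with h | h
  · exact h
  · rcases he.2 c hc.1 with h' | h'
    · exact h'.symm
    · exact absurd h (fun hh => lexLt_asymm hh h')

private lemma cvec_cont (d : ℕ) (P : Finset (Fin d → ℤ)) (n : ℕ) :
    Continuous fun c : (Fin d → ℤ) → ℝ => cvec d P c n := by
  match n with
  | 0 =>
    simp only [cvec, cost0]
    exact continuous_finset_sum _ fun w _ => (continuous_apply w).mul continuous_const
  | Nat.succ k =>
    by_cases h : k < P.toList.length
    · simp only [cvec, dif_pos h]
      exact continuous_apply _
    · simp only [cvec, dif_neg h]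
      exact continuous_const

private lemma exists_minRep (d : ℕ) (P : Finset (Fin d → ℤ))
    (h1 : ∀ w ∈ P, 1 ≤ nsq d w) (x : Fin d → ℝ) (c0 : (Fin d → ℤ) → ℝ)
    (hc0 : IsRep d P x c0) : ∃ c, IsMinRep d P x c := by
  classical
  set B := cost0 d P c0 with hB
  set K0 : Set ((Fin d → ℤ) → ℝ) := {c | IsRep d P x c ∧ cost0 d P c ≤ B} with hK0def
  have hbox : IsCompact (Set.univ.pi fun w : Fin d → ℤ =>
      if w ∈ P then Set.Icc (0:ℝ) B else {0}) := by
    refine isCompact_univ_pi fun w => ?_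
    split
    · exact isCompact_Icc
    · exact isCompact_singleton
  have hsub : K0 ⊆ Set.univ.pi fun w => if w ∈ P then Set.Icc (0:ℝ) B else {0} := by
    intro c hc w _
    obtain ⟨⟨hpos, hoff, _⟩, hcost⟩ := hc
    by_cases hw : w ∈ P
    · simp only [hw, if_true]
      refine ⟨hpos w, ?_⟩
      have h1' : c w ≤ c w * nsq d w := le_mul_of_one_le_right (hpos w) (h1 w hw)
      have h2 : c w * nsq d w ≤ cost0 d P c :=
        Finset.single_le_sum (fun u _ => mul_nonneg (hpos u) (nsq_nonneg d u)) hw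
      linarith
    · simp [hw, hoff w hw]
  have hclA : IsClosed {c : (Fin d → ℤ) → ℝ | ∀ w, 0 ≤ c w} := by
    have he : {c : (Fin d → ℤ) → ℝ | ∀ w, 0 ≤ c w} = ⋂ w, {c | 0 ≤ c w} := by
      ext c; simp [Set.mem_iInter]
    rw [he]
    exact isClosed_iInter fun w => isClosed_le continuous_const (continuous_apply w)
  have hclB : IsClosed {c : (Fin d → ℤ) → ℝ | ∀ w, w ∉ P → c w = 0} := by
    have he : {c : (Fin d → ℤ) → ℝ | ∀ w, w ∉ P → c w = 0}
        = ⋂ w, {c : (Fin d → ℤ) → ℝ | w ∉ P → c w = 0} := by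
      ext c; simp [Set.mem_iInter]
    rw [he]
    refine isClosed_iInter fun w => ?_
    by_cases hw : w ∈ P
    · have : {c : (Fin d → ℤ) → ℝ | w ∉ P → c w = 0} = Set.univ := by
        ext c; simp [hw]
      rw [this]; exact isClosed_univ
    · have : {c : (Fin d → ℤ) → ℝ | w ∉ P → c w = 0} = {c | c w = 0} := by
        ext c; simp [hw]
      rw [this]; exact isClosed_eq (continuous_apply w) continuous_const
  have hclC : IsClosed {c : (Fin d → ℤ) → ℝ | ∑ w ∈ P, c w • castR d w = x} := by
    refine isClosed_eq ?_ continuous_const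
    exact continuous_finset_sum _ fun w _ => (continuous_apply w).smul continuous_const
  have hclD : IsClosed {c : (Fin d → ℤ) → ℝ | cost0 d P c ≤ B} := by
    refine isClosed_le ?_ continuous_const
    exact continuous_finset_sum _ fun w _ => (continuous_apply w).mul continuous_const
  have hcl : IsClosed K0 := by
    have he : K0 = (({c | ∀ w, 0 ≤ c w} ∩ {c | ∀ w, w ∉ P → c w = 0})
        ∩ {c : (Fin d → ℤ) → ℝ | ∑ w ∈ P, c w • castR d w = x}) ∩ {c | cost0 d P c ≤ B} := by
      ext c
      simp only [hK0def, IsRep, Set.mem_setOf_eq, Set.mem_inter_iff]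
      tauto
    rw [he]
    exact ((hclA.inter hclB).inter hclC).inter hclD
  have hK0comp : IsCompact K0 := hbox.of_isClosed_subset hcl hsub
  have hK0ne : K0.Nonempty := ⟨c0, hc0, le_refl _⟩
  let K : ℕ → Set ((Fin d → ℤ) → ℝ) := fun n => Nat.rec K0
    (fun k Kk => {c | c ∈ Kk ∧ ∀ e ∈ Kk, cvec d P c k ≤ cvec d P e k}) n
  have hKsucc : ∀ k, K (k+1) = {c | c ∈ K k ∧ ∀ e ∈ K k, cvec d P c k ≤ cvec d P e k} :=
    fun k => rfl
  have hKprop : ∀ n, IsCompact (K n) ∧ (K n).Nonempty := by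
    intro n; induction n with
    | zero => exact ⟨hK0comp, hK0ne⟩
    | succ k ih =>
      obtain ⟨hcomp, hne⟩ := ih
      constructor
      · have he : K (k+1) = K k ∩ ⋂ e ∈ K k, {c | cvec d P c k ≤ cvec d P e k} := by
          ext c
          simp only [hKsucc, Set.mem_setOf_eq, Set.mem_inter_iff, Set.mem_iInter]
        rw [he]
        exact hcomp.inter_right (isClosed_biInter fun e _ =>
          isClosed_le (cvec_cont d P k) continuous_const)
      · obtain ⟨c, hcK, hmin⟩ := hcomp.exists_isMinOn hne ((cvec_cont d P k).continuousOn)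
        exact ⟨c, hcK, fun e he => hmin he⟩
  have hKmono : ∀ {a b : ℕ}, a ≤ b → K b ⊆ K a := by
    intro a b hab
    exact antitone_nat_of_succ_le (fun n c hc => ((hKsucc n) ▸ hc).1) hab
  obtain ⟨cs, hcs⟩ := (hKprop (P.toList.length + 1)).2
  have hcsK : ∀ j, j ≤ P.toList.length + 1 → cs ∈ K j := fun j hj => hKmono hj hcs
  have hcsK0 : cs ∈ K0 := hcsK 0 (Nat.zero_le _)
  have hcsrep : IsRep d P x cs := hcsK0.1
  refine ⟨cs, hcsrep, ?_⟩
  intro e he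
  by_cases hecost : cost0 d P e ≤ B
  · have heK0 : e ∈ K0 := ⟨he, hecost⟩
    by_cases heq : cs = e
    · exact Or.inl heq
    · right
      have hne : cvec d P cs ≠ cvec d P e := fun h =>
        heq (cvec_inj hcsrep.2.1 he.2.1 h)
      have hex : ∃ n, cvec d P cs n ≠ cvec d P e n := Function.ne_iff.1 hne
      have hkne : cvec d P cs (Nat.find hex) ≠ cvec d P e (Nat.find hex) := Nat.find_spec hex
      set k := Nat.find hex with hk
      have hpre : ∀ j, j < k → cvec d P cs j = cvec d P e j := fun j hj => by
        have := Nat.find_min hex hj; simpa using this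
      clear_value k
      have hkN : k ≤ P.toList.length := by
        by_contra hgt
        push_neg at hgt
        obtain ⟨k', rfl⟩ : ∃ k', k = k' + 1 := ⟨k - 1, by omega⟩
        have hk' : ¬ k' < P.toList.length := by omega
        apply hkne
        have hk2 : ¬ k' < P.card := by simpa [Finset.length_toList] using hk'
        simp [cvec, hk2]
      have heKj : ∀ j, j ≤ k → e ∈ K j := by
        intro j
        induction j with
        | zero => intro _; exact heK0
        | succ i ih =>
          intro hik
          have hei : e ∈ K i := ih (by omega)
          rw [hKsucc i]
          refine ⟨hei, ?_⟩
          intro e' he'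
          have hieq : cvec d P e i = cvec d P cs i := (hpre i (by omega)).symm
          rw [hieq]
          exact ((hKsucc i) ▸ hcsK (i+1) (by omega)).2 e' he'
      have hcsk : ∀ e' ∈ K k, cvec d P cs k ≤ cvec d P e' k :=
        ((hKsucc k) ▸ hcsK (k+1) (by omega)).2
      have hle : cvec d P cs k ≤ cvec d P e k := hcsk e (heKj k le_rfl)
      exact ⟨k, hpre, lt_of_le_of_ne hle hkne⟩
  · right
    push_neg at hecost
    refine ⟨0, fun j hj => absurd hj (Nat.not_lt_zero j), ?_⟩
    have hcsB : cost0 d P cs ≤ B := hcsK0.2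
    calc cvec d P cs 0 = cost0 d P cs := rfl
      _ ≤ B := hcsB
      _ < cost0 d P e := hecost

private lemma cvec_sub (d : ℕ) (P : Finset (Fin d → ℤ)) (a b : (Fin d → ℤ) → ℝ) (n : ℕ) :
    cvec d P (fun w => a w - b w) n = cvec d P a n - cvec d P b n := by
  have h : (fun w => a w - b w) = fun w => a w + (-1) * b w := by funext w; ring
  rw [h, cvec_combo]; ring

private lemma sum_combo {d : ℕ} (S : Finset (Fin d → ℤ)) (c e : (Fin d → ℤ) → ℝ) (t : ℝ)
    (f : (Fin d → ℤ) → (Fin d → ℝ)) :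
    ∑ w ∈ S, (c w + t * e w) • f w
      = (∑ w ∈ S, c w • f w) + t • ∑ w ∈ S, e w • f w := by
  rw [Finset.smul_sum, ← Finset.sum_add_distrib]
  exact Finset.sum_congr rfl fun w _ => by rw [add_smul, smul_smul]

private lemma sum_sub_smul {d : ℕ} (S : Finset (Fin d → ℤ)) (a b : (Fin d → ℤ) → ℝ)
    (f : (Fin d → ℤ) → (Fin d → ℝ)) :
    ∑ w ∈ S, (a w - b w) • f w = (∑ w ∈ S, a w • f w) - ∑ w ∈ S, b w • f w := by
  rw [← Finset.sum_sub_distrib]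
  exact Finset.sum_congr rfl fun w _ => by rw [sub_smul]

/-- Key locality lemma: a representation supported inside the support of a lexicographically
minimal representation is itself lexicographically minimal (for its own point). -/
private lemma minRep_local (d : ℕ) (P : Finset (Fin d → ℤ))
    (hrep0 : ∀ c, IsRep d P 0 c → c = 0) {x : Fin d → ℝ} {c : (Fin d → ℤ) → ℝ}
    (hc : IsMinRep d P x c) (e : (Fin d → ℤ) → ℝ) (he0 : ∀ w, 0 ≤ e w)
    (hes : ∀ w, c w = 0 → e w = 0) :
    IsMinRep d P (∑ w ∈ P, e w • castR d w) e := by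
  classical
  have heoff : ∀ w, w ∉ P → e w = 0 := fun w hw => hes w (hc.1.2.1 w hw)
  have herep : IsRep d P (∑ w ∈ P, e w • castR d w) e := ⟨he0, heoff, rfl⟩
  refine ⟨herep, ?_⟩
  intro e' he'
  by_cases heq : e = e'
  · exact Or.inl heq
  right
  by_contra hnlt
  have hcvne : cvec d P e ≠ cvec d P e' := fun h => heq (cvec_inj heoff he'.2.1 h)
  have hlt : LexLt (cvec d P e') (cvec d P e) := by
    rcases lexLt_total hcvne with h | h
    · exact absurd h hnlt
    · exact h
  set S := P.filter (fun w => 0 < e w) with hS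
  by_cases hSne : S.Nonempty
  · set ε := S.inf' hSne (fun w => c w / e w) with hε
    have hεpos : 0 < ε := by
      rw [hε, Finset.lt_inf'_iff]
      intro w hw
      rw [hS, Finset.mem_filter] at hw
      have hcw : 0 < c w := by
        rcases lt_or_eq_of_le (hc.1.1 w) with h | h
        · exact h
        · exact absurd (hes w h.symm) (ne_of_gt hw.2)
      exact div_pos hcw hw.2
    set cc := fun w => c w + ε * (e' w - e w) with hcc
    have hccrep : IsRep d P x cc := by
      refine ⟨?_, ?_, ?_⟩
      · intro w
        show 0 ≤ c w + ε * (e' w - e w)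
        by_cases hwS : w ∈ S
        · have hwS' := hwS
          rw [hS, Finset.mem_filter] at hwS'
          have h1 : ε ≤ c w / e w := Finset.inf'_le _ hwS
          have h2 : ε * e w ≤ c w := (le_div_iff₀ hwS'.2).1 h1
          have h3 := he'.1 w
          nlinarith
        · have hew0 : e w = 0 := by
            by_cases hwP : w ∈ P
            · by_contra hh
              have : 0 < e w := lt_of_le_of_ne (he0 w) (Ne.symm hh)
              exact hwS (by rw [hS, Finset.mem_filter]; exact ⟨hwP, this⟩)
            · exact heoff w hwP
          have h3 := he'.1 w
          have h4 := hc.1.1 w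
          rw [hew0]
          nlinarith
      · intro w hw
        show c w + ε * (e' w - e w) = 0
        rw [hc.1.2.1 w hw, heoff w hw, he'.2.1 w hw]; ring
      · show ∑ w ∈ P, (c w + ε * (e' w - e w)) • castR d w = x
        rw [sum_combo, sum_sub_smul, he'.2.2, sub_self, smul_zero, add_zero]
        exact hc.1.2.2
    have hcveq : ∀ n, cvec d P cc n
        = cvec d P c n + ε * (cvec d P e' n - cvec d P e n) := by
      intro n
      have h : cvec d P cc n = cvec d P c n + ε * cvec d P (fun w => e' w - e w) n :=
        cvec_combo d P c (fun w => e' w - e w) ε n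
      rw [h, cvec_sub]
    obtain ⟨k, hpre, hk⟩ := hlt
    have hltcc : LexLt (cvec d P cc) (cvec d P c) := by
      refine ⟨k, fun j hj => ?_, ?_⟩
      · rw [hcveq j, hpre j hj]; ring
      · rw [hcveq k]; nlinarith
    rcases hc.2 cc hccrep with hcceq | hccgt
    · have := congrFun (congrArg (cvec d P) hcceq) k
      rw [hcveq k] at this
      nlinarith
    · exact lexLt_asymm hccgt hltcc
  · have he0' : e = 0 := by
      funext w
      by_cases hwP : w ∈ P
      · by_contra hh
        have : 0 < e w := lt_of_le_of_ne (he0 w) (by simpa using Ne.symm hh)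
        exact hSne ⟨w, by rw [hS, Finset.mem_filter]; exact ⟨hwP, this⟩⟩
      · simpa using heoff w hwP
    have hz : ∑ w ∈ P, e w • castR d w = 0 := by
      rw [he0']; simp
    have he'0 : e' = 0 := hrep0 e' (by rw [← hz]; exact he')
    exact heq (by rw [he0', he'0])

private lemma minRep_no_improve {d : ℕ} {P : Finset (Fin d → ℤ)} {x : Fin d → ℝ}
    {c cc : (Fin d → ℤ) → ℝ} (hc : IsMinRep d P x c) (hccrep : IsRep d P x cc)
    {k : ℕ} (hpre : ∀ j, j < k → cvec d P cc j = cvec d P c j)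
    (hk : cvec d P cc k < cvec d P c k) : False := by
  rcases hc.2 cc hccrep with h | h
  · rw [h] at hk; exact lt_irrefl _ hk
  · exact lexLt_asymm h ⟨k, fun j hj => hpre j hj, hk⟩

private lemma cvec_zero (d : ℕ) (P : Finset (Fin d → ℤ)) (n : ℕ) :
    cvec d P (fun _ => 0) n = 0 := by
  match n with
  | 0 => simp [cvec, cost0]
  | Nat.succ k =>
    simp only [cvec]
    split <;> rfl

/-- The support of a lexicographically minimal representation is linearly independent. -/
private lemma minRep_indep (d : ℕ) (P : Finset (Fin d → ℤ))
    (hrep0 : ∀ c, IsRep d P 0 c → c = 0) {x : Fin d → ℝ} {c : (Fin d → ℤ) → ℝ}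
    (hc : IsMinRep d P x c) :
    LinearIndependent ℝ (fun w : ↥(P.filter fun u => c u ≠ 0) => castR d ↑w) := by
  classical
  set s := P.filter (fun u => c u ≠ 0) with hs
  rw [Fintype.linearIndependent_iff]
  intro g hg i
  by_contra hgi
  set lam := fun w => if h : w ∈ s then g ⟨w, h⟩ else 0 with hlam
  have hlam_supp : ∀ w, w ∉ s → lam w = 0 := fun w hw => dif_neg hw
  have hlam_coe : ∀ w : ↥s, lam ↑w = g w := by
    intro w
    show (if h : ↑w ∈ s then g ⟨↑w, h⟩ else 0) = g w
    rw [dif_pos w.2]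
  have hlam_i : lam ↑i ≠ 0 := by rw [hlam_coe i]; exact hgi
  have hsP : s ⊆ P := Finset.filter_subset _ _
  have hlam_offP : ∀ w, w ∉ P → lam w = 0 := fun w hw => hlam_supp w (fun hws => hw (hsP hws))
  have hlam_suppc : ∀ w, lam w ≠ 0 → c w ≠ 0 := by
    intro w hw hcw
    have : w ∉ s := by rw [hs]; simp [hcw]
    exact hw (hlam_supp w this)
  have hlamsum : ∑ w ∈ P, lam w • castR d w = 0 := by
    rw [← Finset.sum_subset hsP (fun w _ hws => by rw [hlam_supp w hws, zero_smul])]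
    calc ∑ w ∈ s, lam w • castR d w = ∑ w : ↥s, lam ↑w • castR d ↑w :=
          (Finset.sum_coe_sort s (fun w => lam w • castR d w)).symm
      _ = ∑ w : ↥s, g w • castR d ↑w := by
          exact Finset.sum_congr rfl fun w _ => by rw [hlam_coe w]
      _ = 0 := hg
  have hlamne : lam ≠ (fun _ => 0) := fun h => hlam_i (congrFun h ↑i)
  have hcvne : cvec d P lam ≠ cvec d P (fun _ => 0) :=
    fun h => hlamne (cvec_inj hlam_offP (fun _ _ => rfl) h)
  -- choose a direction whose cost vector is lexicographically negative
  obtain ⟨dir, hdir_suppc, hdir_offP, hdir_sum, hdir_lt, hdir_ne⟩ :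
      ∃ dir : (Fin d → ℤ) → ℝ, (∀ w, dir w ≠ 0 → c w ≠ 0) ∧ (∀ w, w ∉ P → dir w = 0) ∧
        (∑ w ∈ P, dir w • castR d w = 0) ∧
        (∃ k, (∀ j, j < k → cvec d P dir j = 0) ∧ cvec d P dir k < 0) ∧
        dir ≠ (fun _ => 0) := by
    rcases lexLt_total hcvne with h | h
    · obtain ⟨k, hpre, hk⟩ := h
      refine ⟨lam, hlam_suppc, hlam_offP, hlamsum, ⟨k, ?_, ?_⟩, hlamne⟩
      · intro j hj; rw [hpre j hj, cvec_zero]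
      · rw [cvec_zero] at hk; exact hk
    · obtain ⟨k, hpre, hk⟩ := h
      have hneg : ∀ n, cvec d P (fun w => -lam w) n = -cvec d P lam n := by
        intro n
        have h0 : (fun w => -lam w) = fun w => (fun _ : Fin d → ℤ => (0:ℝ)) w - lam w := by
          funext w; simp
        rw [h0, cvec_sub, cvec_zero]; ring
      refine ⟨fun w => -lam w, ?_, ?_, ?_, ⟨k, ?_, ?_⟩, ?_⟩
      · intro w hw
        refine hlam_suppc w (fun h0 => hw ?_)
        show -lam w = 0
        rw [h0]; ring
      · intro w hw
        show -lam w = 0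
        rw [hlam_offP w hw]; ring
      · have : ∀ w ∈ P, (-lam w) • castR d w = (0 - lam w) • castR d w := by
          intro w _; norm_num
        rw [Finset.sum_congr rfl this, sum_sub_smul, hlamsum]
        simp
      · intro j hj
        rw [hneg j, ← (hpre j hj), cvec_zero]
        simp
      · rw [hneg k]
        rw [cvec_zero] at hk
        linarith
      · intro h0
        apply hlamne
        funext w
        have := congrFun h0 w
        linarith [this]
  obtain ⟨k, hdpre, hdk⟩ := hdir_lt
  set S := P.filter (fun w => dir w < 0) with hS
  have hSne : S.Nonempty := by
    by_contra hSe
    push_neg at hSe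
    have hdpos : ∀ w, 0 ≤ dir w := by
      intro w
      by_cases hwP : w ∈ P
      · by_contra hh
        push_neg at hh
        have : w ∈ S := by rw [hS, Finset.mem_filter]; exact ⟨hwP, hh⟩
        rw [hSe] at this
        exact absurd this (Finset.notMem_empty w)
      · rw [hdir_offP w hwP]
    have : dir = fun _ => 0 := by
      have := hrep0 dir ⟨hdpos, hdir_offP, hdir_sum⟩
      funext w; rw [this]; rfl
    exact hdir_ne this
  set t := S.inf' hSne (fun w => c w / (- dir w)) with ht
  have htpos : 0 < t := by
    rw [ht, Finset.lt_inf'_iff]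
    intro w hw
    rw [hS, Finset.mem_filter] at hw
    have hcw : 0 < c w := lt_of_le_of_ne (hc.1.1 w) (Ne.symm (hdir_suppc w (ne_of_lt hw.2)))
    exact div_pos hcw (by linarith [hw.2])
  set cc := fun w => c w + t * dir w with hcc
  have hccrep : IsRep d P x cc := by
    refine ⟨?_, ?_, ?_⟩
    · intro w
      show 0 ≤ c w + t * dir w
      by_cases hwS : w ∈ S
      · have hwS' := hwS
        rw [hS, Finset.mem_filter] at hwS'
        have h1 : t ≤ c w / (- dir w) := Finset.inf'_le _ hwS
        have h2 : t * (- dir w) ≤ c w := (le_div_iff₀ (by linarith [hwS'.2])).1 h1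
        linarith
      · have hd0 : 0 ≤ dir w := by
          by_cases hwP : w ∈ P
          · by_contra hh
            push_neg at hh
            exact hwS (by rw [hS, Finset.mem_filter]; exact ⟨hwP, hh⟩)
          · rw [hdir_offP w hwP]
        have := hc.1.1 w
        nlinarith
    · intro w hw
      show c w + t * dir w = 0
      rw [hc.1.2.1 w hw, hdir_offP w hw]; ring
    · show ∑ w ∈ P, (c w + t * dir w) • castR d w = x
      rw [sum_combo, hdir_sum, smul_zero, add_zero]
      exact hc.1.2.2
  refine minRep_no_improve hc hccrep (k := k) ?_ ?_
  · intro j hj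
    show cvec d P (fun w => c w + t * dir w) j = cvec d P c j
    rw [cvec_combo, hdpre j hj]; ring
  · show cvec d P (fun w => c w + t * dir w) k < cvec d P c k
    rw [cvec_combo]
    nlinarith

private lemma nsq_nsmul (d : ℕ) (n : ℕ) (z : Fin d → ℤ) :
    nsq d (n • z) = (n:ℝ)^2 * nsq d z := by
  unfold nsq
  rw [Finset.mul_sum]
  refine Finset.sum_congr rfl fun j _ => ?_
  have h : ((n • z) j : ℝ) = (n : ℝ) * (z j : ℝ) := by
    have h0 : (n • z) j = (n : ℤ) * z j := by
      simp [Pi.smul_apply, nsmul_eq_mul]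
    rw [h0]; push_cast; ring
  rw [h]; ring

private lemma castR_nsmul (d : ℕ) (n : ℕ) (z : Fin d → ℤ) :
    castR d (n • z) = (n:ℝ) • castR d z := by
  funext j
  show ((n • z) j : ℝ) = (n:ℝ) * (z j : ℝ)
  have h0 : (n • z) j = (n : ℤ) * z j := by
    simp [Pi.smul_apply, nsmul_eq_mul]
  rw [h0]; push_cast; ring

private lemma sum_ite_one {d : ℕ} (P : Finset (Fin d → ℤ)) {a : Fin d → ℤ} (ha : a ∈ P)
    (f : (Fin d → ℤ) → Fin d → ℝ) :
    ∑ u ∈ P, (if u = a then (1:ℝ) else 0) • f u = f a := by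
  classical
  rw [Finset.sum_eq_single a]
  · simp
  · intro b _ hb; simp [hb]
  · intro h; exact absurd ha h

private lemma sum_ite_smul {d : ℕ} (P : Finset (Fin d → ℤ)) {a : Fin d → ℤ} (ha : a ∈ P)
    (t : ℝ) (f : (Fin d → ℤ) → Fin d → ℝ) :
    ∑ u ∈ P, (t * (if u = a then (1:ℝ) else 0)) • f u = t • f a := by
  classical
  rw [Finset.sum_eq_single a]
  · simp
  · intro b _ hb; simp [hb]
  · intro h; exact absurd ha h

/-- A lexicographically minimal representation only uses primitive vectors. -/
private lemma minRep_primitive (d : ℕ) (P : Finset (Fin d → ℤ))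
    (hP0 : (0 : Fin d → ℤ) ∉ P)
    (hPdown : ∀ w ∈ P, ∀ n : ℕ, 2 ≤ n → ∀ z : Fin d → ℤ, w = n • z → z ∈ P)
    {x : Fin d → ℝ} {c : (Fin d → ℤ) → ℝ} (hc : IsMinRep d P x c) :
    ∀ w, c w ≠ 0 → Primitive d w := by
  classical
  intro w hw
  have hwP : w ∈ P := by
    by_contra hwP
    exact hw (hc.1.2.1 w hwP)
  have hwne : w ≠ 0 := fun h => hP0 (h ▸ hwP)
  intro n hdvd
  by_contra hn1
  have hn0 : n ≠ 0 := by
    intro h0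
    subst h0
    apply hwne
    funext j
    have := hdvd j
    simpa using this
  have hn2 : 2 ≤ n := by omega
  set z := fun j => w j / (n:ℤ) with hz
  have hwz : w = n • z := by
    funext j
    have h0 : (n:ℤ) * (w j / (n:ℤ)) = w j := Int.mul_ediv_cancel' (hdvd j)
    show w j = (n • z) j
    have h1 : (n • z) j = (n : ℤ) * z j := by simp [Pi.smul_apply, nsmul_eq_mul]
    rw [h1]
    show w j = (n:ℤ) * (w j / (n:ℤ))
    omega
  have hzP : z ∈ P := hPdown w hwP n hn2 z hwz
  have hzne : z ≠ 0 := fun h => hP0 (h ▸ hzP)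
  have hzw : z ≠ w := by
    intro h
    obtain ⟨j, hj⟩ := Function.ne_iff.1 hwne
    have hj' : w j ≠ 0 := by simpa using hj
    have h2 := congrFun hwz j
    rw [h] at h2
    have h3 : (n • w) j = (n:ℤ) * w j := by simp [Pi.smul_apply, nsmul_eq_mul]
    rw [h3] at h2
    have h4 : ((n:ℤ) - 1) * w j = 0 := by linarith
    rcases mul_eq_zero.1 h4 with h5 | h5
    · have : (n:ℤ) = 1 := by linarith
      have : n = 1 := by exact_mod_cast this
      omega
    · exact hj' h5
  set A := (n : ℝ) * c w with hA
  have hA0 : 0 ≤ A := mul_nonneg (by positivity) (hc.1.1 w)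
  set e := fun u => c u + A * (if u = z then (1:ℝ) else 0)
      - c w * (if u = w then (1:ℝ) else 0) with he
  have herep : IsRep d P x e := by
    refine ⟨?_, ?_, ?_⟩
    · intro u
      show 0 ≤ c u + A * (if u = z then (1:ℝ) else 0) - c w * (if u = w then (1:ℝ) else 0)
      by_cases h1 : u = z
      · have h2 : u ≠ w := fun h => hzw (h1.symm.trans h)
        rw [if_pos h1, if_neg h2]
        have := hc.1.1 u
        simp only [mul_one, mul_zero]
        linarith
      · by_cases h2 : u = w
        · rw [if_neg h1, if_pos h2, h2]
          simp
        · rw [if_neg h1, if_neg h2]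
          have := hc.1.1 u
          simp only [mul_zero]
          linarith
    · intro u hu
      show c u + A * (if u = z then (1:ℝ) else 0) - c w * (if u = w then (1:ℝ) else 0) = 0
      have h1 : u ≠ z := fun h => hu (h ▸ hzP)
      have h2 : u ≠ w := fun h => hu (h ▸ hwP)
      rw [if_neg h1, if_neg h2, hc.1.2.1 u hu]; ring
    · show ∑ u ∈ P, (c u + A * (if u = z then (1:ℝ) else 0)
          - c w * (if u = w then (1:ℝ) else 0)) • castR d u = x
      rw [sum_sub_smul P (fun u => c u + A * (if u = z then (1:ℝ) else 0))
        (fun u => c w * (if u = w then (1:ℝ) else 0)) (castR d)]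
      rw [sum_combo P c (fun u => if u = z then (1:ℝ) else 0) A (castR d)]
      rw [sum_ite_one P hzP (castR d)]
      have hsm : ∑ u ∈ P, (c w * (if u = w then (1:ℝ) else 0)) • castR d u
          = c w • castR d w := sum_ite_smul P hwP (c w) (castR d)
      rw [hsm, hc.1.2.2]
      have hcast : castR d w = (n:ℝ) • castR d z := by
        conv_lhs => rw [hwz]
        rw [castR_nsmul]
      have hcw : c w • castR d w = A • castR d z := by
        rw [hcast, smul_smul, hA, mul_comm]
      rw [hcw]
      abel
  have hcost : cost0 d P e = cost0 d P c + A * nsq d z - c w * nsq d w := by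
    unfold cost0
    have hsplit : ∀ u ∈ P, e u * nsq d u
        = c u * nsq d u + A * (if u = z then nsq d u else 0)
          - c w * (if u = w then nsq d u else 0) := by
      intro u _
      show (c u + A * (if u = z then (1:ℝ) else 0)
          - c w * (if u = w then (1:ℝ) else 0)) * nsq d u = _
      by_cases h1 : u = z
      · have h2 : u ≠ w := fun h => hzw (h1.symm.trans h)
        simp only [if_pos h1, if_neg h2]; ring
      · by_cases h2 : u = w
        · simp only [if_neg h1, if_pos h2]; ring
        · simp only [if_neg h1, if_neg h2]; ring
    rw [Finset.sum_congr rfl hsplit, Finset.sum_sub_distrib, Finset.sum_add_distrib,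
      ← Finset.mul_sum, ← Finset.mul_sum,
      Finset.sum_ite_eq' P z (nsq d), Finset.sum_ite_eq' P w (nsq d),
      if_pos hzP, if_pos hwP]
  have hnsqw : nsq d w = (n:ℝ)^2 * nsq d z := by rw [hwz, nsq_nsmul]
  have hcwpos : 0 < c w := lt_of_le_of_ne (hc.1.1 w) (Ne.symm hw)
  have hzpos : 0 < nsq d z := nsq_pos hzne
  have hcst : cost0 d P e < cost0 d P c := by
    rw [hcost, hnsqw, hA]
    have hn2' : (2:ℝ) ≤ (n:ℝ) := by exact_mod_cast hn2
    have h7 : (n:ℝ) - (n:ℝ)^2 ≤ -2 := by nlinarith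
    nlinarith [mul_pos hcwpos hzpos, h7]
  refine minRep_no_improve hc herep (k := 0) (fun j hj => absurd hj (Nat.not_lt_zero j)) ?_
  show cost0 d P e < cost0 d P c
  exact hcst

private def idot (d : ℕ) (a b : Fin d → ℤ) : ℝ := ∑ j, (a j : ℝ) * (b j : ℝ)

/-- Strict concavity estimate: a nontrivial subconvex combination of lattice points strictly
decreases the weight `‖·‖²`. -/
private lemma strict_cost (d : ℕ) (s : Finset (Fin d → ℤ)) (x : Fin d → ℤ)
    (hx0 : x ≠ 0) (hxs : x ∉ s) (c : (Fin d → ℤ) → ℝ) (hc0 : ∀ w, 0 ≤ c w)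
    (hsum : ∑ w ∈ s, c w ≤ 1)
    (hrep : ∑ w ∈ s, c w • castR d w = castR d x) :
    nsq d x < ∑ w ∈ s, c w * nsq d w := by
  classical
  have h1 : ∀ w : Fin d → ℤ, nsq d (w - x) = nsq d w - 2 * idot d w x + nsq d x := by
    intro w
    unfold nsq idot
    rw [Finset.mul_sum, ← Finset.sum_sub_distrib, ← Finset.sum_add_distrib]
    refine Finset.sum_congr rfl fun j _ => ?_
    have hj : ((w - x) j : ℝ) = (w j : ℝ) - (x j : ℝ) := by
      simp [Pi.sub_apply]
    rw [hj]; ring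
  have hrepj : ∀ j, ∑ w ∈ s, c w * (w j : ℝ) = (x j : ℝ) := by
    intro j
    have h := congrFun hrep j
    simpa [Finset.sum_apply, castR] using h
  have h2 : ∑ w ∈ s, c w * idot d w x = nsq d x := by
    unfold idot nsq
    calc ∑ w ∈ s, c w * ∑ j, (w j : ℝ) * (x j : ℝ)
        = ∑ w ∈ s, ∑ j, c w * ((w j : ℝ) * (x j : ℝ)) := by
          refine Finset.sum_congr rfl fun w _ => ?_; rw [Finset.mul_sum]
      _ = ∑ j, ∑ w ∈ s, c w * ((w j : ℝ) * (x j : ℝ)) := Finset.sum_comm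
      _ = ∑ j, (∑ w ∈ s, c w * (w j : ℝ)) * (x j : ℝ) := by
          refine Finset.sum_congr rfl fun j _ => ?_
          rw [Finset.sum_mul]
          refine Finset.sum_congr rfl fun w _ => by ring
      _ = ∑ j, (x j : ℝ)^2 := by
          refine Finset.sum_congr rfl fun j _ => ?_
          rw [hrepj j]; ring
  have h3 : ∑ w ∈ s, c w * nsq d (w - x)
      = ∑ w ∈ s, c w * nsq d w - 2 * nsq d x + (∑ w ∈ s, c w) * nsq d x := by
    calc ∑ w ∈ s, c w * nsq d (w - x)
        = ∑ w ∈ s, (c w * nsq d w - 2 * (c w * idot d w x) + c w * nsq d x) := by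
          refine Finset.sum_congr rfl fun w _ => ?_
          rw [h1 w]; ring
      _ = ∑ w ∈ s, c w * nsq d w - 2 * ∑ w ∈ s, (c w * idot d w x)
            + (∑ w ∈ s, c w) * nsq d x := by
          rw [Finset.sum_add_distrib, Finset.sum_sub_distrib, ← Finset.mul_sum,
            ← Finset.sum_mul]
      _ = _ := by rw [h2]
  have hA : 0 ≤ ∑ w ∈ s, c w * nsq d (w - x) :=
    Finset.sum_nonneg fun w _ => mul_nonneg (hc0 w) (nsq_nonneg _ _)
  have hxpos : 0 < nsq d x := nsq_pos hx0
  rcases lt_or_eq_of_le hsum with hT | hT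
  · nlinarith [h3, hA, hxpos]
  · have hApos : 0 < ∑ w ∈ s, c w * nsq d (w - x) := by
      rcases lt_or_eq_of_le hA with h | h
      · exact h
      · exfalso
        have hz := (Finset.sum_eq_zero_iff_of_nonneg
          (fun w _ => mul_nonneg (hc0 w) (nsq_nonneg d (w - x)))).1 h.symm
        have hczero : ∀ w ∈ s, c w = 0 := by
          intro w hws
          rcases mul_eq_zero.1 (hz w hws) with h' | h'
          · exact h'
          · exfalso
            have hwx : w - x ≠ 0 := sub_ne_zero.2 (fun he => hxs (he ▸ hws))
            exact ne_of_gt (nsq_pos hwx) h'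
        rw [Finset.sum_eq_zero hczero] at hT
        norm_num at hT
    nlinarith [h3, hApos]

/-- Extract coefficients from membership in `conv(0 ∪ s)`. -/
private lemma mem_hull_coeffs (d : ℕ) (s : Finset (Fin d → ℤ)) (h0 : (0 : Fin d → ℤ) ∉ s)
    (y : Fin d → ℝ)
    (hy : y ∈ convexHull ℝ (insert 0 (castR d '' (s : Set (Fin d → ℤ))))) :
    ∃ c : (Fin d → ℤ) → ℝ, (∀ w, 0 ≤ c w) ∧ (∀ w, w ∉ s → c w = 0) ∧
      (∑ w ∈ s, c w) ≤ 1 ∧ ∑ w ∈ s, c w • castR d w = y := by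
  classical
  have hne0 : (0 : Fin d → ℝ) ∉ s.image (castR d) := by
    intro h
    obtain ⟨p, hp, hpe⟩ := Finset.mem_image.1 h
    exact h0 (castR_eq_zero hpe ▸ hp)
  have hset : insert (0 : Fin d → ℝ) (castR d '' (s : Set (Fin d → ℤ)))
      = ((insert 0 (s.image (castR d)) : Finset (Fin d → ℝ)) : Set (Fin d → ℝ)) := by
    simp [Finset.coe_insert, Finset.coe_image]
  rw [hset] at hy
  rw [Finset.mem_convexHull] at hy
  obtain ⟨W, hW0, hWsum, hWc⟩ := hy
  rw [Finset.centerMass_eq_of_sum_1 _ id hWsum] at hWc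
  rw [Finset.sum_insert hne0] at hWc hWsum
  refine ⟨fun w => if w ∈ s then W (castR d w) else 0, ?_, ?_, ?_, ?_⟩
  · intro w
    dsimp only
    by_cases hw : w ∈ s
    · rw [if_pos hw]
      exact hW0 _ (Finset.mem_insert_of_mem (Finset.mem_image_of_mem _ hw))
    · rw [if_neg hw]
  · intro w hw; dsimp only; rw [if_neg hw]
  · dsimp only
    have himg : ∑ w ∈ s, (if w ∈ s then W (castR d w) else 0) = ∑ u ∈ s.image (castR d), W u := by
      rw [Finset.sum_image (fun a _ b _ h => castR_inj d h)]
      exact Finset.sum_congr rfl fun w hw => if_pos hw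
    rw [himg]
    have hW00 : 0 ≤ W 0 := hW0 _ (Finset.mem_insert_self _ _)
    linarith [le_of_eq hWsum]
  · dsimp only
    have himg : ∑ w ∈ s, (if w ∈ s then W (castR d w) else 0) • castR d w
        = ∑ u ∈ s.image (castR d), W u • u := by
      rw [Finset.sum_image (fun a _ b _ h => castR_inj d h)]
      refine Finset.sum_congr rfl fun w hw => ?_
      rw [if_pos hw]
    rw [himg]
    have : W 0 • (0 : Fin d → ℝ) + ∑ u ∈ s.image (castR d), W u • id u = y := hWc
    simpa using this

end Stmt13Aux

theorem stmt13 (d m : ℕ) (v : Fin m → Fin d → ℤ)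
    (hprim : ∀ i, Primitive d (v i))
    -- each `v i` lies on an extreme ray: it is not in the cone of the other generators
    (hextreme : ∀ i, (fun j => (v i j : ℝ)) ∉
      coneFam d m (fun k => if k = i then 0 else v k))
    -- the cone is pointed
    (hpointed : coneFam d m v ∩ (-(coneFam d m v)) = {0}) :
    ∃ F : Finset (Finset (Fin d → ℤ)),
      (∀ s ∈ F,
        LinearIndependent ℝ (fun w : s => fun j => ((w : Fin d → ℤ) j : ℝ)) ∧
        (∀ w ∈ s, Primitive d w) ∧
        -- the simplicial cone on `s` is empty: the only lattice points of `Δ_{C'}`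
        -- are `0` and the generators
        (∀ x : Fin d → ℤ,
          (fun j => (x j : ℝ)) ∈
            convexHull ℝ (insert 0 ((fun w : Fin d → ℤ => fun j => (w j : ℝ)) ''
              (s : Set (Fin d → ℤ)))) → x = 0 ∨ x ∈ s) ∧
        convexHull ℝ (insert 0 ((fun w : Fin d → ℤ => fun j => (w j : ℝ)) ''
            (s : Set (Fin d → ℤ)))) ⊆
          convexHull ℝ (insert 0 (Set.range fun i => fun j => (v i j : ℝ)))) ∧
      (⋃ s ∈ F, coneFS d s) = coneFam d m v ∧
      -- the cones intersect pairwise in common faces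
      ∀ s ∈ F, ∀ t ∈ F, coneFS d s ∩ coneFS d t = coneFS d (s ∩ t) := by
  classical
  set Δ : Set (Fin d → ℝ) :=
    convexHull ℝ (insert 0 (Set.range fun i => fun j => (v i j : ℝ))) with hΔdef
  set C : Set (Fin d → ℝ) := coneFam d m v with hCdef
  have hΔconvex : Convex ℝ Δ := convex_convexHull ℝ _
  have h0Δ : (0 : Fin d → ℝ) ∈ Δ := subset_convexHull ℝ _ (Set.mem_insert _ _)
  have hvΔ : ∀ i, castR d (v i) ∈ Δ :=
    fun i => subset_convexHull ℝ _ (Set.mem_insert_iff.2 (Or.inr ⟨i, rfl⟩))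
  have hvne : ∀ i, v i ≠ 0 := by
    intro i h
    have := hprim i 2 (fun j => by rw [h]; exact dvd_zero 2)
    norm_num at this
  -- closure properties of C
  have hCzero : (0 : Fin d → ℝ) ∈ C := ⟨fun _ => 0, fun i => le_refl 0, by simp⟩
  have hCadd : ∀ x y, x ∈ C → y ∈ C → x + y ∈ C := by
    rintro x y ⟨a, ha0, rfl⟩ ⟨b, hb0, rfl⟩
    refine ⟨fun i => a i + b i, fun i => add_nonneg (ha0 i) (hb0 i), ?_⟩
    rw [← Finset.sum_add_distrib]
    exact Finset.sum_congr rfl fun i _ => (add_smul _ _ _).symm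
  have hCsmul : ∀ (t : ℝ) x, 0 ≤ t → x ∈ C → t • x ∈ C := by
    rintro t x ht ⟨a, ha0, rfl⟩
    refine ⟨fun i => t * a i, fun i => mul_nonneg ht (ha0 i), ?_⟩
    rw [Finset.smul_sum]
    exact Finset.sum_congr rfl fun i _ => (smul_smul _ _ _)
  have hCconvex : Convex ℝ C := by
    intro x hx y hy a b ha hb hab
    exact hCadd _ _ (hCsmul a x ha hx) (hCsmul b y hb hy)
  have hΔC : Δ ⊆ C := by
    refine convexHull_min ?_ hCconvex
    rintro y hy
    rcases Set.mem_insert_iff.1 hy with rfl | ⟨i, rfl⟩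
    · exact hCzero
    · refine ⟨fun k => if k = i then 1 else 0, fun k => by dsimp only; split <;> norm_num, ?_⟩
      have hterm : ∀ k : Fin m, ((if k = i then (1:ℝ) else 0) • fun j => ((v k j : ℝ)))
          = if k = i then (fun j => ((v k j : ℝ))) else 0 := by
        intro k
        split <;> simp
      calc (fun j => ((v i j : ℝ)))
          = ∑ k : Fin m, if k = i then (fun j => ((v k j : ℝ))) else 0 := by
            rw [Finset.sum_ite_eq' Finset.univ i (fun k => (fun j => ((v k j : ℝ))))]
            simp
        _ = ∑ k : Fin m, (if k = i then (1:ℝ) else 0) • fun j => ((v k j : ℝ)) := by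
            exact (Finset.sum_congr rfl fun k _ => hterm k).symm
  have hsumC : ∀ (S : Finset (Fin d → ℤ)) (g : (Fin d → ℤ) → ℝ),
      (∀ w ∈ S, castR d w ∈ C) → (∀ w, 0 ≤ g w) → ∑ w ∈ S, g w • castR d w ∈ C := by
    intro S
    induction S using Finset.induction_on with
    | empty => intro g _ _; simpa using hCzero
    | @insert a S hnotmem ih =>
      intro g hmem hg
      rw [Finset.sum_insert hnotmem]
      exact hCadd _ _ (hCsmul _ _ (hg _) (hmem _ (Finset.mem_insert_self _ _)))
        (ih g (fun w hw => hmem w (Finset.mem_insert_of_mem hw)) hg)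
  -- bounding box for Δ
  set M : ℤ := ∑ i : Fin m, ∑ j : Fin d, |v i j| with hMdef
  have hM0 : (0:ℤ) ≤ M :=
    Finset.sum_nonneg fun i _ => Finset.sum_nonneg fun j _ => abs_nonneg _
  have hbound : ∀ y ∈ Δ, ∀ j, |y j| ≤ (M:ℝ) := by
    have hBox : Convex ℝ {y : Fin d → ℝ | ∀ j, |y j| ≤ (M:ℝ)} := by
      intro p hp q hq a b ha hb hab j
      calc |(a • p + b • q) j| = |a * p j + b * q j| := by
            simp [Pi.add_apply, Pi.smul_apply, smul_eq_mul]
        _ ≤ |a * p j| + |b * q j| := abs_add_le _ _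
        _ = a * |p j| + b * |q j| := by
            rw [abs_mul, abs_mul, abs_of_nonneg ha, abs_of_nonneg hb]
        _ ≤ a * (M:ℝ) + b * (M:ℝ) :=
            add_le_add (mul_le_mul_of_nonneg_left (hp j) ha)
              (mul_le_mul_of_nonneg_left (hq j) hb)
        _ = (M:ℝ) := by rw [← add_mul, hab, one_mul]
    intro y hy
    refine convexHull_min ?_ hBox hy
    rintro u hu
    rcases Set.mem_insert_iff.1 hu with rfl | ⟨i, rfl⟩
    · intro j
      simp only [Pi.zero_apply, abs_zero]
      exact_mod_cast hM0
    · intro j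
      have h1 : |v i j| ≤ ∑ j', |v i j'| :=
        Finset.single_le_sum (f := fun j' => |v i j'|) (fun _ _ => abs_nonneg _) (mem_univ j)
      have h2 : ∑ j', |v i j'| ≤ M :=
        Finset.single_le_sum (f := fun i' => ∑ j', |v i' j'|)
          (fun _ _ => Finset.sum_nonneg fun _ _ => abs_nonneg _) (mem_univ i)
      have h3 : |v i j| ≤ M := le_trans h1 h2
      have : |((v i j : ℤ) : ℝ)| ≤ ((M : ℤ) : ℝ) := by
        rw [← Int.cast_abs]
        exact_mod_cast h3
      exact this
  -- the finite set of nonzero lattice points of Δ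
  set P : Finset (Fin d → ℤ) := (Finset.Icc (fun _ => -M) (fun _ => M)).filter
    (fun w => castR d w ∈ Δ ∧ w ≠ 0) with hPdef
  have hPmem : ∀ z : Fin d → ℤ, castR d z ∈ Δ → z ≠ 0 → z ∈ P := by
    intro z hz hz0
    rw [hPdef, Finset.mem_filter]
    refine ⟨?_, hz, hz0⟩
    rw [Finset.mem_Icc]
    constructor
    · intro j
      have := hbound _ hz j
      have habs : |(z j : ℝ)| ≤ (M:ℝ) := this
      have h1 : -(M:ℝ) ≤ (z j : ℝ) := neg_le_of_abs_le habs
      show -M ≤ z j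
      exact_mod_cast h1
    · intro j
      have habs : |(z j : ℝ)| ≤ (M:ℝ) := hbound _ hz j
      have h1 : (z j : ℝ) ≤ (M:ℝ) := le_of_abs_le habs
      show z j ≤ M
      exact_mod_cast h1
  have hPfacts : ∀ w ∈ P, castR d w ∈ Δ ∧ w ≠ 0 := by
    intro w hw
    rw [hPdef, Finset.mem_filter] at hw
    exact hw.2
  have hP0 : (0 : Fin d → ℤ) ∉ P := fun h => (hPfacts 0 h).2 rfl
  have h1nsq : ∀ w ∈ P, 1 ≤ nsq d w := fun w hw => nsq_one_le (hPfacts w hw).2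
  have hPC : ∀ w ∈ P, castR d w ∈ C := fun w hw => hΔC (hPfacts w hw).1
  have hPdown : ∀ w ∈ P, ∀ n : ℕ, 2 ≤ n → ∀ z : Fin d → ℤ, w = n • z → z ∈ P := by
    intro w hwP n hn2 z hwz
    have hwne := (hPfacts w hwP).2
    have hzne : z ≠ 0 := by
      intro h
      apply hwne
      rw [hwz, h]
      funext j; simp
    refine hPmem z ?_ hzne
    have hn0 : (0:ℝ) < (n:ℝ) := by
      have : (0:ℕ) < n := by omega
      exact_mod_cast this
    have hcast : castR d z = (1/(n:ℝ)) • castR d w + (1 - 1/(n:ℝ)) • (0 : Fin d → ℝ) := by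
      rw [smul_zero, add_zero, hwz, castR_nsmul, smul_smul]
      rw [one_div, inv_mul_cancel₀ (ne_of_gt hn0), one_smul]
    rw [hcast]
    refine hΔconvex (hPfacts w hwP).1 h0Δ ?_ ?_ (by ring)
    · positivity
    · have : 1/(n:ℝ) ≤ 1 := by
        rw [div_le_one hn0]
        exact_mod_cast (by omega : 1 ≤ n)
      linarith
  -- pointedness: the only representation of 0 is trivial
  have hrep0 : ∀ c, IsRep d P 0 c → c = 0 := by
    intro c hc
    funext w
    by_cases hwP : w ∈ P
    · by_contra hcw
      have hcwpos : 0 < c w := lt_of_le_of_ne (hc.1 w) (Ne.symm hcw)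
      have hsplit : c w • castR d w + ∑ u ∈ P.erase w, c u • castR d u = 0 := by
        rw [Finset.add_sum_erase P (fun u => c u • castR d u) hwP]
        exact hc.2.2
      have hrest : ∑ u ∈ P.erase w, c u • castR d u ∈ C :=
        hsumC _ _ (fun u hu => hPC u (Finset.mem_of_mem_erase hu)) (fun u => hc.1 u)
      have h3 : ∑ u ∈ P.erase w, c u • castR d u = -(c w • castR d w) :=
        eq_neg_of_add_eq_zero_right hsplit
      have h2 : (1 / c w) • (∑ u ∈ P.erase w, c u • castR d u) = - castR d w := by
        rw [h3, smul_neg, smul_smul, one_div, inv_mul_cancel₀ (ne_of_gt hcwpos), one_smul]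
      have hnegC : -castR d w ∈ C := by
        rw [← h2]
        exact hCsmul _ _ (by positivity) hrest
      have hwC : castR d w ∈ C := hPC w hwP
      have hmem2 : castR d w ∈ C ∩ (-C) := ⟨hwC, Set.mem_neg.2 hnegC⟩
      rw [hpointed] at hmem2
      have : castR d w = 0 := hmem2
      exact (hPfacts w hwP).2 (castR_eq_zero this)
    · exact hc.2.1 w hwP
  -- initial representations
  have hviP : ∀ i, v i ∈ P := fun i => hPmem (v i) (hvΔ i) (hvne i)
  have hinit : ∀ x ∈ C, ∃ c, IsRep d P x c := by
    rintro x ⟨a, ha0, rfl⟩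
    refine ⟨fun w => ∑ i : Fin m, if v i = w then a i else 0, ?_, ?_, ?_⟩
    · intro w
      refine Finset.sum_nonneg fun i _ => ?_
      split
      · exact ha0 i
      · exact le_refl 0
    · intro w hw
      refine Finset.sum_eq_zero fun i _ => ?_
      by_cases he : v i = w
      · exact absurd (he ▸ hviP i) hw
      · rw [if_neg he]
    · have hsw : ∀ w ∈ P, (∑ i : Fin m, if v i = w then a i else 0) • castR d w
          = ∑ i : Fin m, (if v i = w then a i else 0) • castR d w := fun w _ => Finset.sum_smul
      rw [Finset.sum_congr rfl hsw, Finset.sum_comm]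
      refine Finset.sum_congr rfl fun i _ => ?_
      have hterm : ∀ w ∈ P, (if v i = w then a i else 0) • castR d w
          = if w = v i then a i • castR d w else 0 := by
        intro w _
        by_cases he : v i = w
        · rw [if_pos he, if_pos he.symm]
        · rw [if_neg he, if_neg (fun h => he h.symm), zero_smul]
      rw [Finset.sum_congr rfl hterm, Finset.sum_ite_eq' P (v i)
        (fun w => a i • castR d w), if_pos (hviP i)]
      rfl
  -- hull of subsets of P is inside Δ
  have hhull : ∀ s : Finset (Fin d → ℤ), s ⊆ P →
      convexHull ℝ (insert 0 (castR d '' (s : Set (Fin d → ℤ)))) ⊆ Δ := by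
    intro s hs
    refine convexHull_min ?_ hΔconvex
    rintro u hu
    rcases Set.mem_insert_iff.1 hu with rfl | ⟨p, hp, rfl⟩
    · exact h0Δ
    · exact (hPfacts p (hs hp)).1
  -- the family of supports of minimal representations
  set F : Finset (Finset (Fin d → ℤ)) := P.powerset.filter
    (fun s => ∃ x c, IsMinRep d P x c ∧ s = P.filter (fun w => c w ≠ 0)) with hFdef
  have hFsub : ∀ s ∈ F, s ⊆ P := by
    intro s hs
    rw [hFdef, Finset.mem_filter] at hs
    exact Finset.mem_powerset.1 hs.1
  have hFmin : ∀ s ∈ F, ∃ x c, IsMinRep d P x c ∧ s = P.filter (fun w => c w ≠ 0) := by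
    intro s hs
    rw [hFdef, Finset.mem_filter] at hs
    exact hs.2
  -- membership of the represented point in the support cone
  have hmem_coneFS : ∀ (x : Fin d → ℝ) (c), IsMinRep d P x c →
      x ∈ coneFS d (P.filter fun w => c w ≠ 0) := by
    intro x c hc
    refine ⟨c, hc.1.1, ?_⟩
    show x = ∑ w ∈ P.filter (fun w => c w ≠ 0), c w • castR d w
    rw [← hc.1.2.2]
    refine (Finset.sum_subset (Finset.filter_subset _ _) ?_).symm
    intro w hw hnw
    have hc0 : c w = 0 := by
      by_contra h
      exact hnw (Finset.mem_filter.2 ⟨hw, h⟩)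
    rw [hc0, zero_smul]
  -- points of a support cone have minimal representations supported there
  have hconeFS_min : ∀ s ∈ F, ∀ x ∈ coneFS d s,
      ∃ e, IsMinRep d P x e ∧ (∀ w, e w ≠ 0 → w ∈ s) := by
    intro s hsF x hx
    obtain ⟨y, cy, hcy, hseq⟩ := hFmin s hsF
    have hsP : s ⊆ P := hFsub s hsF
    obtain ⟨c, hc0, hxeq⟩ := hx
    have hsupp : ∀ w, (if w ∈ s then c w else 0) ≠ 0 → w ∈ s := by
      intro w hw
      by_contra h
      exact hw (if_neg h)
    have he0 : ∀ w, 0 ≤ (if w ∈ s then c w else 0) := by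
      intro w
      split
      · exact hc0 w
      · exact le_refl 0
    have hes : ∀ w, cy w = 0 → (if w ∈ s then c w else 0) = 0 := by
      intro w hcyw
      by_cases hws : w ∈ s
      · exfalso
        rw [hseq, Finset.mem_filter] at hws
        exact hws.2 hcyw
      · exact if_neg hws
    have hloc := minRep_local d P hrep0 hcy (fun w => if w ∈ s then c w else 0) he0 hes
    have hzeq : ∑ w ∈ P, (if w ∈ s then c w else 0) • castR d w = x := by
      rw [← Finset.sum_subset hsP (fun w _ hns => by rw [if_neg hns, zero_smul])]
      rw [hxeq]
      exact (Finset.sum_congr rfl fun w hw => by rw [if_pos hw]; exact rfl).symm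
    rw [hzeq] at hloc
    exact ⟨_, hloc, hsupp⟩
  have hmono : ∀ (s t : Finset (Fin d → ℤ)), s ⊆ t → coneFS d s ⊆ coneFS d t := by
    intro s t hst x hx
    obtain ⟨c, hc0, hxeq⟩ := hx
    refine ⟨fun w => if w ∈ s then c w else 0, ?_, ?_⟩
    · intro w
      dsimp only
      split
      · exact hc0 w
      · exact le_refl 0
    show x = ∑ w ∈ t, (if w ∈ s then c w else 0) • castR d w
    rw [← Finset.sum_subset hst (fun w _ hns => by rw [if_neg hns, zero_smul])]
    rw [hxeq]
    exact Finset.sum_congr rfl fun w hw => by rw [if_pos hw]; exact rfl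
  refine ⟨F, ?_, ?_, ?_⟩
  · -- conditions on each cell
    intro s hsF
    obtain ⟨y, cy, hcy, hseq⟩ := hFmin s hsF
    have hsP : s ⊆ P := hFsub s hsF
    refine ⟨?_, ?_, ?_, ?_⟩
    · have h := minRep_indep d P hrep0 hcy
      rw [← hseq] at h
      exact h
    · intro w hws
      have hw : cy w ≠ 0 := by
        rw [hseq] at hws
        exact (Finset.mem_filter.1 hws).2
      exact minRep_primitive d P hP0 hPdown hcy w hw
    · -- emptiness
      intro x hx
      by_cases hx0 : x = 0
      · exact Or.inl hx0
      by_cases hxs : x ∈ s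
      · exact Or.inr hxs
      exfalso
      have h0s : (0 : Fin d → ℤ) ∉ s := fun h => hP0 (hsP h)
      obtain ⟨cc, hcc0, hccoff, hccsum, hccrep⟩ := mem_hull_coeffs d s h0s _ hx
      have hxP : x ∈ P := hPmem x (hhull s hsP hx) hx0
      have hes : ∀ w, cy w = 0 → cc w = 0 := by
        intro w hcyw
        apply hccoff
        intro hws
        rw [hseq, Finset.mem_filter] at hws
        exact hws.2 hcyw
      have hloc := minRep_local d P hrep0 hcy cc hcc0 hes
      have hsum : ∑ w ∈ P, cc w • castR d w = castR d x := by
        rw [← Finset.sum_subset hsP (fun w _ hns => by rw [hccoff w hns, zero_smul])]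
        exact hccrep
      rw [hsum] at hloc
      have hdelrep : IsRep d P (castR d x) (fun u => if u = x then (1:ℝ) else 0) := by
        refine ⟨?_, ?_, ?_⟩
        · intro u
          dsimp only
          split <;> norm_num
        · intro u hu
          dsimp only
          rw [if_neg (fun h => hu (by rw [h]; exact hxP))]
        · have := sum_ite_one P hxP (castR d)
          rw [← this]
      have hstrict : nsq d x < ∑ w ∈ s, cc w * nsq d w :=
        strict_cost d s x hx0 hxs cc hcc0 hccsum hccrep
      have hc0e : cost0 d P cc = ∑ w ∈ s, cc w * nsq d w := by
        unfold cost0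
        refine (Finset.sum_subset hsP ?_).symm
        intro w _ hns
        rw [hccoff w hns, zero_mul]
      have hc0d : cost0 d P (fun u => if u = x then (1:ℝ) else 0) = nsq d x := by
        unfold cost0
        have hterm : ∀ u ∈ P, (if u = x then (1:ℝ) else 0) * nsq d u
            = if u = x then nsq d u else 0 := by
          intro u _
          by_cases h : u = x
          · rw [if_pos h, if_pos h, one_mul]
          · rw [if_neg h, if_neg h, zero_mul]
        rw [Finset.sum_congr rfl hterm, Finset.sum_ite_eq' P x (nsq d), if_pos hxP]
      rcases hloc.2 _ hdelrep with heq | hlt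
      · have h1 : cc x = 1 := by
          have := congrFun heq x
          rw [this, if_pos rfl]
        have h2 : cc x = 0 := hccoff x hxs
        rw [h2] at h1
        norm_num at h1
      · obtain ⟨k, hpre, hk⟩ := hlt
        match k with
        | 0 =>
          have : cost0 d P cc < cost0 d P (fun u => if u = x then (1:ℝ) else 0) := hk
          rw [hc0e, hc0d] at this
          linarith
        | Nat.succ k' =>
          have h0 : cost0 d P cc = cost0 d P (fun u => if u = x then (1:ℝ) else 0) :=
            hpre 0 (Nat.succ_pos k')
          rw [hc0e, hc0d] at h0
          linarith
    · exact hhull s hsP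
  · -- union
    apply Set.eq_of_subset_of_subset
    · intro x hx
      rw [Set.mem_iUnion₂] at hx
      obtain ⟨s, hsF, c, hc0, hxeq⟩ := hx
      rw [hxeq]
      exact hsumC s c (fun w hw => hPC w (hFsub s hsF hw)) hc0
    · intro x hx
      obtain ⟨c0, hc0⟩ := hinit x hx
      obtain ⟨c, hc⟩ := exists_minRep d P h1nsq x c0 hc0
      refine Set.mem_iUnion₂.2 ⟨P.filter (fun w => c w ≠ 0), ?_, hmem_coneFS x c hc⟩
      rw [hFdef]
      exact Finset.mem_filter.2
        ⟨Finset.mem_powerset.2 (Finset.filter_subset _ _), ⟨x, c, hc, rfl⟩⟩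
  · -- face property
    intro s hsF t htF
    apply Set.eq_of_subset_of_subset
    · intro x hx
      obtain ⟨e1, he1, hsupp1⟩ := hconeFS_min s hsF x hx.1
      obtain ⟨e2, he2, hsupp2⟩ := hconeFS_min t htF x hx.2
      have heq : e1 = e2 := minRep_unique he1 he2
      refine ⟨e1, he1.1.1, ?_⟩
      show x = ∑ w ∈ s ∩ t, e1 w • castR d w
      rw [← he1.1.2.2]
      refine (Finset.sum_subset ?_ ?_).symm
      · intro w hw
        exact hFsub s hsF (Finset.mem_inter.1 hw).1
      · intro w _ hwns
        have he10 : e1 w = 0 := by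
          by_contra h
          apply hwns
          refine Finset.mem_inter.2 ⟨hsupp1 w h, hsupp2 w ?_⟩
          rw [← heq]
          exact h
        rw [he10, zero_smul]
    · intro x hx
      exact ⟨hmono _ _ Finset.inter_subset_left hx, hmono _ _ Finset.inter_subset_right hx⟩
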